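/- (Proposition 5(i)) Suppose Assumption 1 holds. Then for all γ_r > 0 and γ_c > 0, the matrix S(γ_r, γ_c) = P_Ω + γ_r (I_p ⊗ L_r) + γ_c (L_c ⊗ I_n) is invertible and tr(S(γ_r, γ_c)^{-1}) ≥ R·C, where R and C are the numbers of connected components of the row and column graphs. -/

import Mathlib

open Matrix BigOperators Finset Kronecker

/-- The weighted graph Laplacian: `L i i = ∑ j, w i j` and `L i j = -(w i j)` for `i ≠ j`. -/
noncomputable def lap {n : ℕ} (w : Fin n → Fin n → ℝ) : Matrix (Fin n) (Fin n) ℝ :=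
  Matrix.of fun i j => if i = j then (∑ k, w i k) else -(w i j)

/-- The graph on `Fin n` with `i ~ j` iff `i ≠ j` and `w i j > 0` (for symmetric `w`). -/
def graphOf {n : ℕ} (w : Fin n → Fin n → ℝ) : SimpleGraph (Fin n) :=
  SimpleGraph.fromRel (fun i j => 0 < w i j)

/-- The 0/1 indicator vector of a subset. -/
noncomputable def chi {n : ℕ} (A : Set (Fin n)) : Fin n → ℝ :=
  A.indicator (fun _ => (1 : ℝ))

/-- The diagonal 0/1 projection matrix `P_Ω`, acting on column-major vectorizations
indexed by `Fin p × Fin n` (first the column index, then the row index). -/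
noncomputable def Pmat {n p : ℕ} (Ω : Finset (Fin n × Fin p)) :
    Matrix (Fin p × Fin n) (Fin p × Fin n) ℝ :=
  Matrix.diagonal fun q => if (q.2, q.1) ∈ Ω then (1 : ℝ) else 0

/-- The matrix `S(γr, γc) = P_Ω + γr (I_p ⊗ L_r) + γc (L_c ⊗ I_n)`. -/
noncomputable def Smat {n p : ℕ} (Ω : Finset (Fin n × Fin p)) (γr γc : ℝ)
    (Lr : Matrix (Fin n) (Fin n) ℝ) (Lc : Matrix (Fin p) (Fin p) ℝ) :
    Matrix (Fin p × Fin n) (Fin p × Fin n) ℝ :=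
  Pmat Ω + γr • ((1 : Matrix (Fin p) (Fin p) ℝ) ⊗ₖ Lr)
    + γc • (Lc ⊗ₖ (1 : Matrix (Fin n) (Fin n) ℝ))

lemma lap_mulVec {n : ℕ} (w : Fin n → Fin n → ℝ) (hdiag : ∀ i, w i i = 0)
    (x : Fin n → ℝ) (i : Fin n) :
    (lap w *ᵥ x) i = ∑ j, w i j * (x i - x j) := by
  classical
  have h1 : ∀ j, (if i = j then (∑ k, w i k) else -(w i j)) * x j
      = ((if i = j then (∑ k, w i k) * x j else 0) + (if i = j then w i j * x j else 0))
        - w i j * x j := by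
    intro j; by_cases h : i = j <;> simp [h] <;> ring
  have h2 : (lap w *ᵥ x) i
      = ∑ j, ((if i = j then (∑ k, w i k) * x j else 0) + (if i = j then w i j * x j else 0))
        - ∑ j, w i j * x j := by
    simp only [lap, mulVec, dotProduct, of_apply]
    rw [← Finset.sum_sub_distrib]
    exact Finset.sum_congr rfl fun j _ => h1 j
  rw [h2, Finset.sum_add_distrib, Finset.sum_ite_eq, Finset.sum_ite_eq]
  simp only [Finset.mem_univ, if_true, hdiag i, zero_mul, add_zero]
  simp_rw [mul_sub]
  rw [Finset.sum_sub_distrib, ← Finset.sum_mul]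

lemma lap_quad {n : ℕ} (w : Fin n → Fin n → ℝ) (hsymm : ∀ i j, w i j = w j i)
    (hdiag : ∀ i, w i i = 0) (x : Fin n → ℝ) :
    x ⬝ᵥ (lap w *ᵥ x) = (1/2) * ∑ i, ∑ j, w i j * (x i - x j)^2 := by
  have key : ∑ i, ∑ j, (1/2 * (w i j * (x j)^2)) = ∑ i, ∑ j, (1/2 * (w i j * (x i)^2)) := by
    rw [Finset.sum_comm]
    exact Finset.sum_congr rfl fun i _ => Finset.sum_congr rfl fun j _ => by rw [hsymm]
  calc x ⬝ᵥ (lap w *ᵥ x) = ∑ i, ∑ j, (x i * (w i j * (x i - x j))) := by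
        simp only [dotProduct, lap_mulVec w hdiag x, Finset.mul_sum]
    _ = ∑ i, ∑ j, ((1/2 * (w i j * (x i - x j)^2)
          + (1/2 * (w i j * (x i)^2) - 1/2 * (w i j * (x j)^2)))) := by
        exact Finset.sum_congr rfl fun i _ => Finset.sum_congr rfl fun j _ => by ring
    _ = (1/2) * ∑ i, ∑ j, w i j * (x i - x j)^2 := by
        simp_rw [Finset.sum_add_distrib, Finset.sum_sub_distrib]
        rw [key, sub_self, add_zero, Finset.mul_sum]
        exact Finset.sum_congr rfl fun i _ => by rw [Finset.mul_sum]

lemma lap_quad_nonneg {n : ℕ} (w : Fin n → Fin n → ℝ) (hsymm : ∀ i j, w i j = w j i)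
    (hnonneg : ∀ i j, 0 ≤ w i j) (hdiag : ∀ i, w i i = 0) (x : Fin n → ℝ) :
    0 ≤ x ⬝ᵥ (lap w *ᵥ x) := by
  rw [lap_quad w hsymm hdiag x]
  have : 0 ≤ ∑ i, ∑ j, w i j * (x i - x j)^2 :=
    Finset.sum_nonneg fun i _ => Finset.sum_nonneg fun j _ =>
      mul_nonneg (hnonneg i j) (sq_nonneg _)
  linarith

lemma lap_quad_eq_zero {n : ℕ} (w : Fin n → Fin n → ℝ) (hsymm : ∀ i j, w i j = w j i)
    (hnonneg : ∀ i j, 0 ≤ w i j) (hdiag : ∀ i, w i i = 0) (x : Fin n → ℝ)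
    (h : x ⬝ᵥ (lap w *ᵥ x) = 0) : ∀ i j, 0 < w i j → x i = x j := by
  rw [lap_quad w hsymm hdiag x] at h
  have hsum : ∑ i, ∑ j, w i j * (x i - x j)^2 = 0 := by linarith
  have h1 := (Finset.sum_eq_zero_iff_of_nonneg (fun i _ =>
    Finset.sum_nonneg fun j _ => mul_nonneg (hnonneg i j) (sq_nonneg _))).mp hsum
  intro i j hw
  have h2 := (Finset.sum_eq_zero_iff_of_nonneg (fun j _ =>
    mul_nonneg (hnonneg i j) (sq_nonneg _))).mp (h1 i (Finset.mem_univ i)) j (Finset.mem_univ j)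
  have h3 : (x i - x j)^2 = 0 := by
    rcases mul_eq_zero.mp h2 with h | h
    · exact absurd h (ne_of_gt hw)
    · exact h
  have := pow_eq_zero_iff (n := 2) (by norm_num) |>.mp h3
  linarith

lemma eq_of_reachable {n : ℕ} {w : Fin n → Fin n → ℝ} (x : Fin n → ℝ)
    (h : ∀ i j, 0 < w i j → x i = x j) {i j : Fin n}
    (hr : (graphOf w).Reachable i j) : x i = x j := by
  obtain ⟨wlk⟩ := hr
  induction wlk with
  | nil => rfl
  | cons hadj _ ih =>
    rename_i a b c _
    rw [graphOf, SimpleGraph.fromRel_adj] at hadj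
    obtain ⟨-, h1 | h1⟩ := hadj
    · exact (h _ _ h1).trans ih
    · exact ((h _ _ h1).symm).trans ih

lemma lap_mulVec_indicator {n : ℕ} (w : Fin n → Fin n → ℝ)
    (hnonneg : ∀ i j, 0 ≤ w i j) (hdiag : ∀ i, w i i = 0) (A : Set (Fin n))
    (hA : ∀ i j, 0 < w i j → (i ∈ A ↔ j ∈ A)) :
    lap w *ᵥ chi A = 0 := by
  funext i
  rw [Pi.zero_apply, lap_mulVec w hdiag]
  refine Finset.sum_eq_zero fun j _ => ?_
  rcases (hnonneg i j).eq_or_lt with h | h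
  · rw [← h]; ring
  · have hij := hA i j h
    by_cases hi : i ∈ A
    · rw [chi, Set.indicator_of_mem hi, Set.indicator_of_mem (hij.mp hi)]; ring
    · rw [chi, Set.indicator_of_notMem hi, Set.indicator_of_notMem (fun hj => hi (hij.mpr hj))]
      ring

lemma kron_one_left_mulVec {n p : ℕ} (M : Matrix (Fin n) (Fin n) ℝ)
    (x : Fin p × Fin n → ℝ) (q : Fin p × Fin n) :
    (((1 : Matrix (Fin p) (Fin p) ℝ) ⊗ₖ M) *ᵥ x) q = (M *ᵥ fun i => x (q.1, i)) q.2 := by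
  simp only [mulVec, dotProduct, kroneckerMap_apply, one_apply, Fintype.sum_prod_type,
    ite_mul, one_mul, zero_mul]
  rw [show (∑ c' : Fin p, ∑ i' : Fin n, if q.1 = c' then M q.2 i' * x (c', i') else 0)
      = ∑ c' : Fin p, (if q.1 = c' then ∑ i' : Fin n, M q.2 i' * x (c', i') else 0) from
    Finset.sum_congr rfl fun c' _ => by by_cases h : q.1 = c' <;> simp [h]]
  simp

lemma kron_one_right_mulVec {n p : ℕ} (M : Matrix (Fin p) (Fin p) ℝ)
    (x : Fin p × Fin n → ℝ) (q : Fin p × Fin n) :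
    ((M ⊗ₖ (1 : Matrix (Fin n) (Fin n) ℝ)) *ᵥ x) q = (M *ᵥ fun c => x (c, q.2)) q.1 := by
  simp only [mulVec, dotProduct, kroneckerMap_apply, one_apply, Fintype.sum_prod_type,
    mul_ite, mul_one, mul_zero, ite_mul, zero_mul]
  refine Finset.sum_congr rfl fun c' _ => ?_
  rw [Finset.sum_ite_eq (Finset.univ) q.2 (fun i' => M q.1 c' * x (c', i'))]
  simp

lemma kron_quad_left {n p : ℕ} (M : Matrix (Fin n) (Fin n) ℝ) (x : Fin p × Fin n → ℝ) :
    x ⬝ᵥ (((1 : Matrix (Fin p) (Fin p) ℝ) ⊗ₖ M) *ᵥ x)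
      = ∑ c : Fin p, (fun i => x (c, i)) ⬝ᵥ (M *ᵥ fun i => x (c, i)) := by
  simp only [dotProduct]
  rw [Fintype.sum_prod_type]
  exact Finset.sum_congr rfl fun c _ => Finset.sum_congr rfl fun i _ => by
    rw [kron_one_left_mulVec]

lemma kron_quad_right {n p : ℕ} (M : Matrix (Fin p) (Fin p) ℝ) (x : Fin p × Fin n → ℝ) :
    x ⬝ᵥ ((M ⊗ₖ (1 : Matrix (Fin n) (Fin n) ℝ)) *ᵥ x)
      = ∑ i : Fin n, (fun c => x (c, i)) ⬝ᵥ (M *ᵥ fun c => x (c, i)) := by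
  simp only [dotProduct]
  rw [Fintype.sum_prod_type_right]
  exact Finset.sum_congr rfl fun i _ => Finset.sum_congr rfl fun c _ => by
    rw [kron_one_right_mulVec]

lemma kron_one_left_mulVec_prod {n p : ℕ} (M : Matrix (Fin n) (Fin n) ℝ)
    (f : Fin n → ℝ) (g : Fin p → ℝ) :
    (((1 : Matrix (Fin p) (Fin p) ℝ) ⊗ₖ M) *ᵥ fun q => g q.1 * f q.2)
      = fun q => g q.1 * (M *ᵥ f) q.2 := by
  funext q
  rw [kron_one_left_mulVec]
  show (M *ᵥ (g q.1 • f)) q.2 = _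
  rw [mulVec_smul]
  simp

lemma kron_one_right_mulVec_prod {n p : ℕ} (M : Matrix (Fin p) (Fin p) ℝ)
    (f : Fin n → ℝ) (g : Fin p → ℝ) :
    ((M ⊗ₖ (1 : Matrix (Fin n) (Fin n) ℝ)) *ᵥ fun q => g q.1 * f q.2)
      = fun q => (M *ᵥ g) q.1 * f q.2 := by
  funext q
  rw [kron_one_right_mulVec]
  have h : (fun c => g c * f q.2) = f q.2 • g := by funext c; simp [mul_comm]
  rw [h, mulVec_smul]
  simp [mul_comm]

lemma pmat_quad {n p : ℕ} (Ω : Finset (Fin n × Fin p)) (x : Fin p × Fin n → ℝ) :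
    x ⬝ᵥ (Pmat Ω *ᵥ x) = ∑ q, (if (q.2, q.1) ∈ Ω then (x q)^2 else 0) := by
  simp only [Pmat, dotProduct, mulVec_diagonal]
  exact Finset.sum_congr rfl fun q _ => by by_cases h : (q.2, q.1) ∈ Ω <;> simp [h] <;> ring

lemma pmat_quad_nonneg {n p : ℕ} (Ω : Finset (Fin n × Fin p)) (x : Fin p × Fin n → ℝ) :
    0 ≤ x ⬝ᵥ (Pmat Ω *ᵥ x) := by
  rw [pmat_quad]
  exact Finset.sum_nonneg fun q _ => by positivity

lemma pmat_quad_le {n p : ℕ} (Ω : Finset (Fin n × Fin p)) (x : Fin p × Fin n → ℝ) :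
    x ⬝ᵥ (Pmat Ω *ᵥ x) ≤ x ⬝ᵥ x := by
  rw [pmat_quad]
  have : x ⬝ᵥ x = ∑ q, (x q)^2 := by
    simp [dotProduct, sq]
  rw [this]
  exact Finset.sum_le_sum fun q _ => by by_cases h : (q.2, q.1) ∈ Ω <;> simp [h] <;> positivity

lemma smat_quad {n p : ℕ} (Ω : Finset (Fin n × Fin p)) (γr γc : ℝ)
    (Lr : Matrix (Fin n) (Fin n) ℝ) (Lc : Matrix (Fin p) (Fin p) ℝ)
    (x : Fin p × Fin n → ℝ) :
    x ⬝ᵥ (Smat Ω γr γc Lr Lc *ᵥ x)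
      = x ⬝ᵥ (Pmat Ω *ᵥ x)
        + γr * ∑ c : Fin p, (fun i => x (c, i)) ⬝ᵥ (Lr *ᵥ fun i => x (c, i))
        + γc * ∑ i : Fin n, (fun c => x (c, i)) ⬝ᵥ (Lc *ᵥ fun c => x (c, i)) := by
  simp only [Smat, add_mulVec, dotProduct_add, smul_mulVec, dotProduct_smul, smul_eq_mul]
  rw [kron_quad_left, kron_quad_right]

lemma lap_symm {n : ℕ} (w : Fin n → Fin n → ℝ) (hsymm : ∀ i j, w i j = w j i) :
    ∀ i j, lap w i j = lap w j i := by
  intro i j; by_cases h : i = j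
  · rw [h]
  · simp [lap, h, Ne.symm h, hsymm i j]

lemma one_apply_symm {m : Type*} [DecidableEq m] [Fintype m] (a b : m) :
    (1 : Matrix m m ℝ) a b = (1 : Matrix m m ℝ) b a := by
  simp [Matrix.one_apply, eq_comm]

lemma smat_isHermitian {n p : ℕ} (Ω : Finset (Fin n × Fin p)) (γr γc : ℝ)
    (w : Fin n → Fin n → ℝ) (wt : Fin p → Fin p → ℝ)
    (hsymm : ∀ i j, w i j = w j i) (hsymm' : ∀ i j, wt i j = wt j i) :
    (Smat Ω γr γc (lap w) (lap wt)).IsHermitian := by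
  have e1 : ∀ q q', Pmat Ω q' q = Pmat Ω q q' := by
    intro q q'
    by_cases h : q = q'
    · rw [h]
    · rw [Pmat, Matrix.diagonal_apply_ne _ (Ne.symm h), Matrix.diagonal_apply_ne _ h]
  have e2 : ∀ q q', ((1 : Matrix (Fin p) (Fin p) ℝ) ⊗ₖ lap w) q' q
      = ((1 : Matrix (Fin p) (Fin p) ℝ) ⊗ₖ lap w) q q' := by
    intro q q'
    simp only [kroneckerMap_apply]
    rw [one_apply_symm, lap_symm w hsymm]
  have e3 : ∀ q q', (lap wt ⊗ₖ (1 : Matrix (Fin n) (Fin n) ℝ)) q' q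
      = (lap wt ⊗ₖ (1 : Matrix (Fin n) (Fin n) ℝ)) q q' := by
    intro q q'
    simp only [kroneckerMap_apply]
    rw [one_apply_symm, lap_symm wt hsymm']
  rw [Matrix.IsHermitian]
  ext q q'
  rw [Matrix.conjTranspose_apply, star_trivial]
  simp only [Smat, Matrix.add_apply, Matrix.smul_apply, smul_eq_mul]
  rw [e1, e2, e3]

lemma smat_posDef {n p R C : ℕ} (Ω : Finset (Fin n × Fin p))
    (γr γc : ℝ) (hγr : 0 < γr) (hγc : 0 < γc)
    (w : Fin n → Fin n → ℝ) (wt : Fin p → Fin p → ℝ)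
    (hsymm : ∀ i j, w i j = w j i) (hnonneg : ∀ i j, 0 ≤ w i j)
    (hdiag : ∀ i, w i i = 0)
    (hsymm' : ∀ i j, wt i j = wt j i) (hnonneg' : ∀ i j, 0 ≤ wt i j)
    (hdiag' : ∀ i, wt i i = 0)
    (A : Fin R → Set (Fin n))
    (eA : (graphOf w).ConnectedComponent ≃ Fin R)
    (hA : ∀ r, A r = {v | eA ((graphOf w).connectedComponentMk v) = r})
    (B : Fin C → Set (Fin p))
    (eB : (graphOf wt).ConnectedComponent ≃ Fin C)
    (hB : ∀ c, B c = {v | eB ((graphOf wt).connectedComponentMk v) = c})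
    (hobs : ∀ r c, ∃ q ∈ Ω, q.1 ∈ A r ∧ q.2 ∈ B c) :
    (Smat Ω γr γc (lap w) (lap wt)).PosDef := by
  refine Matrix.PosDef.of_dotProduct_mulVec_pos (smat_isHermitian Ω γr γc w wt hsymm hsymm') fun x hx => ?_
  have hstar : star x = x := funext fun _ => star_trivial _
  rw [hstar, smat_quad]
  set a := x ⬝ᵥ (Pmat Ω *ᵥ x) with ha
  set b := ∑ c : Fin p, (fun i => x (c, i)) ⬝ᵥ (lap w *ᵥ fun i => x (c, i)) with hb
  set c := ∑ i : Fin n, (fun cc => x (cc, i)) ⬝ᵥ (lap wt *ᵥ fun cc => x (cc, i)) with hc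
  have hann : 0 ≤ a := pmat_quad_nonneg Ω x
  have hbnn : 0 ≤ b := Finset.sum_nonneg fun cc _ => lap_quad_nonneg w hsymm hnonneg hdiag _
  have hcnn : 0 ≤ c := Finset.sum_nonneg fun i _ => lap_quad_nonneg wt hsymm' hnonneg' hdiag' _
  by_contra hle
  push_neg at hle
  have ha0 : a = 0 := by nlinarith
  have hb0 : b = 0 := by nlinarith
  have hc0 : c = 0 := by nlinarith
  -- row-constancy on each column slice
  have hrow : ∀ (cc : Fin p) (i i' : Fin n), (graphOf w).Reachable i i' → x (cc, i) = x (cc, i') := by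
    intro cc i i' hr
    have hq : (fun i => x (cc, i)) ⬝ᵥ (lap w *ᵥ fun i => x (cc, i)) = 0 := by
      exact (Finset.sum_eq_zero_iff_of_nonneg (fun cc' _ =>
        lap_quad_nonneg w hsymm hnonneg hdiag (fun i => x (cc', i)))).mp hb0 cc (Finset.mem_univ cc)
    exact eq_of_reachable _ (lap_quad_eq_zero w hsymm hnonneg hdiag _ hq) hr
  have hcol : ∀ (i : Fin n) (cc cc' : Fin p), (graphOf wt).Reachable cc cc' → x (cc, i) = x (cc', i) := by
    intro i cc cc' hr
    have hq : (fun d => x (d, i)) ⬝ᵥ (lap wt *ᵥ fun d => x (d, i)) = 0 :=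
      (Finset.sum_eq_zero_iff_of_nonneg (fun i' _ =>
        lap_quad_nonneg wt hsymm' hnonneg' hdiag' (fun d => x (d, i')))).mp hc0 i (Finset.mem_univ i)
    exact eq_of_reachable _ (lap_quad_eq_zero wt hsymm' hnonneg' hdiag' _ hq) hr
  have hobs0 : ∀ q : Fin n × Fin p, q ∈ Ω → x (q.2, q.1) = 0 := by
    intro q hq
    have h1 : ∑ q', (if ((q' : Fin p × Fin n).2, q'.1) ∈ Ω then (x q')^2 else 0) = 0 := by
      rw [← pmat_quad]; exact ha0
    have h2 := (Finset.sum_eq_zero_iff_of_nonneg (fun q' _ => by positivity)).mp h1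
      (q.2, q.1) (Finset.mem_univ _)
    simp only [hq, if_pos] at h2
    exact pow_eq_zero_iff (n := 2) (by norm_num) |>.mp h2
  obtain ⟨q₀, hq₀⟩ := Function.ne_iff.mp hx
  obtain ⟨q₁, hmem, hi, hj⟩ := hobs (eA ((graphOf w).connectedComponentMk q₀.2))
    (eB ((graphOf wt).connectedComponentMk q₀.1))
  rw [hA] at hi
  rw [hB] at hj
  have hri : (graphOf w).Reachable q₀.2 q₁.1 :=
    ((SimpleGraph.ConnectedComponent.eq).mp (eA.injective hi)).symm
  have hrj : (graphOf wt).Reachable q₀.1 q₁.2 :=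
    ((SimpleGraph.ConnectedComponent.eq).mp (eB.injective hj)).symm
  have : x q₀ = 0 := by
    have e1 : x q₀ = x (q₀.1, q₁.1) := hrow q₀.1 q₀.2 q₁.1 hri
    have e2 : x (q₀.1, q₁.1) = x (q₁.2, q₁.1) := hcol q₁.1 q₀.1 q₁.2 hrj
    rw [e1, e2]
    exact hobs0 q₁ hmem
  exact hq₀ this

section CS
variable {ι : Type*} [Fintype ι] [DecidableEq ι]



lemma psd_symm_dot {M : Matrix ι ι ℝ} (hM : M.IsHermitian) (u v : ι → ℝ) :
    u ⬝ᵥ (M *ᵥ v) = v ⬝ᵥ (M *ᵥ u) := by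
  have hMs : ∀ i j, M i j = M j i := by
    intro i j
    conv_lhs => rw [← hM]
    rw [Matrix.conjTranspose_apply, star_trivial]
  simp only [dotProduct, mulVec, Finset.mul_sum]
  rw [Finset.sum_comm]
  exact Finset.sum_congr rfl fun i _ => Finset.sum_congr rfl fun j _ => by
    rw [hMs j i]; ring

lemma psd_cauchy {M : Matrix ι ι ℝ} (hM : M.PosSemidef) (u v : ι → ℝ) :
    (u ⬝ᵥ (M *ᵥ v))^2 ≤ (u ⬝ᵥ (M *ᵥ u)) * (v ⬝ᵥ (M *ᵥ v)) := by
  have key : ∀ t : ℝ, 0 ≤ (v ⬝ᵥ (M *ᵥ v)) * (t * t) + (2 * (u ⬝ᵥ (M *ᵥ v))) * t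
      + (u ⬝ᵥ (M *ᵥ u)) := by
    intro t
    have h0 := hM.dotProduct_mulVec_nonneg (u + t • v)
    rw [show star (u + t • v) = u + t • v from funext fun _ => star_trivial _] at h0
    rw [Matrix.mulVec_add, Matrix.mulVec_smul, dotProduct_add, add_dotProduct,
      add_dotProduct, dotProduct_smul, smul_dotProduct, smul_dotProduct,
      dotProduct_smul, smul_eq_mul, smul_eq_mul, smul_eq_mul] at h0
    have hsym := psd_symm_dot hM.1 v u
    simp only [smul_eq_mul] at h0
    rw [hsym] at h0
    nlinarith [h0]
  have hd := discrim_le_zero key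
  rw [discrim] at hd
  nlinarith [hd]

lemma vecMulVec_mul_vecMulVec (a b c d : ι → ℝ) :
    vecMulVec a b * vecMulVec c d = (b ⬝ᵥ c) • vecMulVec a d := by
  ext i j
  simp only [Matrix.mul_apply, vecMulVec_apply, Matrix.smul_apply, smul_eq_mul, dotProduct,
    Finset.sum_mul, Finset.mul_sum]
  exact Finset.sum_congr rfl fun k _ => by ring

lemma trace_mul_vecMulVec (M : Matrix ι ι ℝ) (a b : ι → ℝ) :
    (M * vecMulVec a b).trace = b ⬝ᵥ (M *ᵥ a) := by
  simp only [Matrix.trace, Matrix.diag_apply, Matrix.mul_apply, vecMulVec_apply, dotProduct,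
    mulVec, Finset.mul_sum]
  exact Finset.sum_congr rfl fun i _ => Finset.sum_congr rfl fun j _ => by ring

lemma psd_trace_nonneg {M : Matrix ι ι ℝ} (hM : M.PosSemidef) : 0 ≤ M.trace := by
  have : ∀ i, 0 ≤ M i i := by
    intro i
    have h := hM.dotProduct_mulVec_nonneg (Pi.single i 1)
    simpa [dotProduct, mulVec, Pi.single_apply] using h
  exact Finset.sum_nonneg fun i _ => this i

lemma trace_lower_bound {κ : Type*} [Fintype κ] {M : Matrix ι ι ℝ} (hM : M.PosSemidef)
    (u : κ → ι → ℝ)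
    (horth : ∀ k l, k ≠ l → (u k) ⬝ᵥ (u l) = 0) :
    ∑ k, ((u k) ⬝ᵥ (M *ᵥ (u k))) / ((u k) ⬝ᵥ (u k)) ≤ M.trace := by
  classical
  obtain ⟨T, hT⟩ : ∃ T : Matrix ι ι ℝ, T = ∑ k, ((u k) ⬝ᵥ (u k))⁻¹ • vecMulVec (u k) (u k) :=
    ⟨_, rfl⟩
  obtain ⟨Q, hQ⟩ : ∃ Q : Matrix ι ι ℝ, Q = 1 - T := ⟨_, rfl⟩
  have hTT : T * T = T := by
    rw [hT, Finset.sum_mul_sum]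
    rw [Finset.sum_congr rfl (fun k _ => Finset.sum_congr rfl (fun l _ => by
      rw [Matrix.smul_mul, Matrix.mul_smul, _root_.vecMulVec_mul_vecMulVec]))]
    have : ∀ k l : κ, ((u k) ⬝ᵥ (u k))⁻¹ • ((u l) ⬝ᵥ (u l))⁻¹ • (((u k) ⬝ᵥ (u l)) • vecMulVec (u k) (u l))
        = if k = l then ((u k) ⬝ᵥ (u k))⁻¹ • vecMulVec (u k) (u k) else 0 := by
      intro k l
      by_cases h : k = l
      · subst h
        simp only [if_pos rfl]
        by_cases hz : (u k) ⬝ᵥ (u k) = 0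
        · simp [hz]
        · rw [smul_smul, smul_smul]
          congr 1
          field_simp
      · rw [if_neg h, horth k l h]
        simp
    rw [Finset.sum_congr rfl fun k _ => Finset.sum_congr rfl fun l _ => this k l]
    simp [Finset.sum_ite_eq']
  have hTsym : Tᵀ = T := by
    rw [hT]
    ext i j
    simp only [Matrix.transpose_apply, Matrix.sum_apply, Matrix.smul_apply, vecMulVec_apply,
      smul_eq_mul]
    exact Finset.sum_congr rfl fun k _ => by ring
  have hQQ : Q * Q = Q := by
    rw [hQ, Matrix.sub_mul, Matrix.mul_sub, Matrix.mul_sub, Matrix.one_mul, Matrix.mul_one,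
      hTT]
    rw [Matrix.one_mul]
    abel
  have hQsym : Qᵀ = Q := by rw [hQ, Matrix.transpose_sub, Matrix.transpose_one, hTsym]
  -- trace M = trace (M*T) + trace (M*Q)
  have hsplit : M.trace = (M * T).trace + (M * Q).trace := by
    rw [hQ, Matrix.mul_sub, Matrix.mul_one, Matrix.trace_sub]
    ring
  have hMT : (M * T).trace = ∑ k, ((u k) ⬝ᵥ (u k))⁻¹ * ((u k) ⬝ᵥ (M *ᵥ (u k))) := by
    rw [hT, Matrix.mul_sum, Matrix.trace_sum]
    exact Finset.sum_congr rfl fun k _ => by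
      rw [Matrix.mul_smul, Matrix.trace_smul, trace_mul_vecMulVec, smul_eq_mul]
  have hMQ : 0 ≤ (M * Q).trace := by
    have h1 : (M * Q).trace = (Qᴴ * M * Q).trace := by
      have hQc : Qᴴ = Q := by
        rw [show Qᴴ = Qᵀ from Matrix.ext fun i j => star_trivial _, hQsym]
      rw [hQc]
      calc (M * Q).trace = (M * (Q * Q)).trace := by rw [hQQ]
        _ = (M * Q * Q).trace := by rw [Matrix.mul_assoc]
        _ = (Q * (M * Q)).trace := (Matrix.trace_mul_comm _ _)
        _ = (Q * M * Q).trace := by rw [Matrix.mul_assoc]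
    rw [h1]
    exact psd_trace_nonneg (hM.conjTranspose_mul_mul_same Q)
  rw [hsplit, hMT]
  have hle : ∑ k, ((u k) ⬝ᵥ (M *ᵥ (u k))) / ((u k) ⬝ᵥ (u k))
      ≤ ∑ k, ((u k) ⬝ᵥ (u k))⁻¹ * ((u k) ⬝ᵥ (M *ᵥ (u k))) := by
    refine le_of_eq (Finset.sum_congr rfl fun k _ => ?_)
    rw [div_eq_inv_mul]
  linarith

end CS

/-- Proposition 5(i): under Assumption 1 and `γr, γc > 0`, `S(γr, γc)` is
invertible and `tr(S(γr, γc)⁻¹) ≥ R·C`. -/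
theorem dof_lower_bound {n p R C : ℕ} (Ω : Finset (Fin n × Fin p))
    (γr γc : ℝ) (hγr : 0 < γr) (hγc : 0 < γc)
    (w : Fin n → Fin n → ℝ) (wt : Fin p → Fin p → ℝ)
    (hsymm : ∀ i j, w i j = w j i) (hnonneg : ∀ i j, 0 ≤ w i j)
    (hdiag : ∀ i, w i i = 0)
    (hsymm' : ∀ i j, wt i j = wt j i) (hnonneg' : ∀ i j, 0 ≤ wt i j)
    (hdiag' : ∀ i, wt i i = 0)
    (A : Fin R → Set (Fin n))
    (eA : (graphOf w).ConnectedComponent ≃ Fin R)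
    (hA : ∀ r, A r = {v | eA ((graphOf w).connectedComponentMk v) = r})
    (B : Fin C → Set (Fin p))
    (eB : (graphOf wt).ConnectedComponent ≃ Fin C)
    (hB : ∀ c, B c = {v | eB ((graphOf wt).connectedComponentMk v) = c})
    (hobs : ∀ r c, ∃ q ∈ Ω, q.1 ∈ A r ∧ q.2 ∈ B c) :
    IsUnit (Smat Ω γr γc (lap w) (lap wt)) ∧
    ((R : ℝ) * (C : ℝ)) ≤ ((Smat Ω γr γc (lap w) (lap wt))⁻¹).trace := by
  classical
  set S := Smat Ω γr γc (lap w) (lap wt) with hS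
  have hpd : S.PosDef := smat_posDef Ω γr γc hγr hγc w wt hsymm hnonneg hdiag
    hsymm' hnonneg' hdiag' A eA hA B eB hB hobs
  refine ⟨hpd.isUnit, ?_⟩
  have hdet : IsUnit S.det := isUnit_iff_ne_zero.mpr hpd.det_pos.ne'
  have hSinv : S * S⁻¹ = 1 := Matrix.mul_nonsing_inv S hdet
  have hpdinv : (S⁻¹).PosDef := hpd.inv
  -- component membership is adjacency-invariant
  have hcompA : ∀ (r : Fin R) i j, 0 < w i j → (i ∈ A r ↔ j ∈ A r) := by
    intro r i j hw
    by_cases hij : i = j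
    · rw [hij]
    · have hadj : (graphOf w).Adj i j := by
        rw [graphOf, SimpleGraph.fromRel_adj]; exact ⟨hij, Or.inl hw⟩
      have hcc : (graphOf w).connectedComponentMk i = (graphOf w).connectedComponentMk j :=
        SimpleGraph.ConnectedComponent.sound hadj.reachable
      rw [hA]; simp [Set.mem_setOf_eq, hcc]
  have hcompB : ∀ (c : Fin C) i j, 0 < wt i j → (i ∈ B c ↔ j ∈ B c) := by
    intro c i j hw
    by_cases hij : i = j
    · rw [hij]
    · have hadj : (graphOf wt).Adj i j := by
        rw [graphOf, SimpleGraph.fromRel_adj]; exact ⟨hij, Or.inl hw⟩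
      have hcc : (graphOf wt).connectedComponentMk i = (graphOf wt).connectedComponentMk j :=
        SimpleGraph.ConnectedComponent.sound hadj.reachable
      rw [hB]; simp [Set.mem_setOf_eq, hcc]
  -- the family of block indicator vectors
  set u : Fin R × Fin C → (Fin p × Fin n → ℝ) :=
    fun k q => chi (B k.2) q.1 * chi (A k.1) q.2 with hu
  have hchiA01 : ∀ (r : Fin R) v, chi (A r) v = 0 ∨ chi (A r) v = 1 := by
    intro r v
    by_cases h : v ∈ A r
    · right; rw [chi, Set.indicator_of_mem h]
    · left; rw [chi, Set.indicator_of_notMem h]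
  have hchiB01 : ∀ (c : Fin C) v, chi (B c) v = 0 ∨ chi (B c) v = 1 := by
    intro c v
    by_cases h : v ∈ B c
    · right; rw [chi, Set.indicator_of_mem h]
    · left; rw [chi, Set.indicator_of_notMem h]
  have hdisjA : ∀ (r r' : Fin R) v, r ≠ r' → chi (A r) v * chi (A r') v = 0 := by
    intro r r' v hne
    by_cases h : v ∈ A r
    · have h2 : v ∉ A r' := by
        rw [hA] at h; rw [hA]
        simp only [Set.mem_setOf_eq] at h ⊢
        rw [h]; exact hne
      simp only [chi]; rw [Set.indicator_of_notMem h2]; ring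
    · simp only [chi]; rw [Set.indicator_of_notMem h]; ring
  have hdisjB : ∀ (c c' : Fin C) v, c ≠ c' → chi (B c) v * chi (B c') v = 0 := by
    intro c c' v hne
    by_cases h : v ∈ B c
    · have h2 : v ∉ B c' := by
        rw [hB] at h; rw [hB]
        simp only [Set.mem_setOf_eq] at h ⊢
        rw [h]; exact hne
      simp only [chi]; rw [Set.indicator_of_notMem h2]; ring
    · simp only [chi]; rw [Set.indicator_of_notMem h]; ring
  have horth : ∀ k l, k ≠ l → (u k) ⬝ᵥ (u l) = 0 := by
    intro k l hkl
    refine Finset.sum_eq_zero fun q _ => ?_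
    have : u k q * u l q = (chi (B k.2) q.1 * chi (B l.2) q.1)
        * (chi (A k.1) q.2 * chi (A l.1) q.2) := by rw [hu]; ring
    rw [this]
    by_cases h1 : k.1 = l.1
    · have h2 : k.2 ≠ l.2 := fun h2 => hkl (Prod.ext h1 h2)
      rw [hdisjB k.2 l.2 q.1 h2]; ring
    · rw [hdisjA k.1 l.1 q.2 h1]; ring
  -- positivity of the norms
  have hupos : ∀ k, 0 < (u k) ⬝ᵥ (u k) := by
    intro k
    obtain ⟨q₁, hmem, hi, hj⟩ := hobs k.1 k.2
    refine Finset.sum_pos' (fun q _ => mul_self_nonneg _) ⟨(q₁.2, q₁.1), Finset.mem_univ _, ?_⟩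
    have : u k (q₁.2, q₁.1) = 1 := by
      rw [hu]; simp only
      rw [chi, chi, Set.indicator_of_mem hj, Set.indicator_of_mem hi]; ring
    rw [this]; norm_num
  -- S kills the Laplacian parts on u k
  have hSu : ∀ k, S *ᵥ (u k) = Pmat Ω *ᵥ (u k) := by
    intro k
    have hLA : lap w *ᵥ chi (A k.1) = 0 :=
      lap_mulVec_indicator w hnonneg hdiag (A k.1) (hcompA k.1)
    have hLB : lap wt *ᵥ chi (B k.2) = 0 :=
      lap_mulVec_indicator wt hnonneg' hdiag' (B k.2) (hcompB k.2)
    rw [hS, Smat, Matrix.add_mulVec, Matrix.add_mulVec, smul_mulVec, smul_mulVec]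
    have huk : u k = fun q : Fin p × Fin n => chi (B k.2) q.1 * chi (A k.1) q.2 := rfl
    have e1 : ((1 : Matrix (Fin p) (Fin p) ℝ) ⊗ₖ lap w) *ᵥ (u k) = 0 := by
      rw [huk, kron_one_left_mulVec_prod (lap w) (chi (A k.1)) (chi (B k.2)), hLA]
      funext q; simp
    have e2 : (lap wt ⊗ₖ (1 : Matrix (Fin n) (Fin n) ℝ)) *ᵥ (u k) = 0 := by
      rw [huk, kron_one_right_mulVec_prod (lap wt) (chi (A k.1)) (chi (B k.2)), hLB]
      funext q; simp
    rw [e1, e2]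
    simp
  have huSu_le : ∀ k, (u k) ⬝ᵥ (S *ᵥ (u k)) ≤ (u k) ⬝ᵥ (u k) := by
    intro k
    rw [hSu k]
    exact pmat_quad_le Ω (u k)
  have huSu_pos : ∀ k, 0 < (u k) ⬝ᵥ (S *ᵥ (u k)) := by
    intro k
    have hne : u k ≠ 0 := by
      intro h
      have := hupos k
      rw [h] at this
      simp at this
    have := hpd.dotProduct_mulVec_pos hne
    rwa [show star (u k) = u k from funext fun _ => star_trivial _] at this
  -- per-vector lower bound via Cauchy-Schwarz
  have hkey : ∀ k, 1 ≤ ((u k) ⬝ᵥ (S⁻¹ *ᵥ (u k))) / ((u k) ⬝ᵥ (u k)) := by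
    intro k
    have hcs := psd_cauchy hpd.posSemidef (u k) (S⁻¹ *ᵥ (u k))
    rw [Matrix.mulVec_mulVec, hSinv, Matrix.one_mulVec] at hcs
    rw [dotProduct_comm (S⁻¹ *ᵥ u k) (u k)] at hcs
    have h1 := hupos k
    have h2 := huSu_le k
    have h3 := huSu_pos k
    rw [le_div_iff₀ h1, one_mul]
    nlinarith [hcs, h1, h2, h3]
  have htr := trace_lower_bound hpdinv.posSemidef u horth
  have hsum : ((R : ℝ) * (C : ℝ)) ≤ ∑ k, ((u k) ⬝ᵥ (S⁻¹ *ᵥ (u k))) / ((u k) ⬝ᵥ (u k)) := by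
    have h1 : ∑ k : Fin R × Fin C, (1 : ℝ) ≤ ∑ k, ((u k) ⬝ᵥ (S⁻¹ *ᵥ (u k))) / ((u k) ⬝ᵥ (u k)) :=
      Finset.sum_le_sum fun k _ => hkey k
    have h2 : ∑ k : Fin R × Fin C, (1 : ℝ) = (R : ℝ) * (C : ℝ) := by
      rw [Finset.sum_const, Finset.card_univ, Fintype.card_prod, Fintype.card_fin,
        Fintype.card_fin]
      push_cast
      ring
    linarith
  linarith
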